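/- Let α > 2, δ = 2/α, and let B₁, B₂, F > 0 with B₁ ≠ B₂. Define f : (0,F) → ℝ by f(x) = (2^{B₁/x} − 1)^δ + (2^{B₂/(F−x)} − 1)^δ, and let x_p = F·B₁/(B₁ + B₂) be the proportional bandwidth allocation. Then x_p is not a minimizer of f on (0,F): there exists x ∈ (0,F) with f(x) < f(x_p). Equivalently, f′(x_p) = δ·(ln 2)·h((B₁+B₂)/F)·(1/B₂ − 1/B₁) ≠ 0, where h(t) = t²·2^t·(2^t − 1)^{δ−1}. -/

import Mathlib

open Real Filter

lemma exists_lt_of_deriv_ne_zero {f : ℝ → ℝ} {d x : ℝ} {s : Set ℝ} (hs : s ∈ nhds x)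
    (hf : HasDerivAt f d x) (hd : d ≠ 0) : ∃ y ∈ s, f y < f x := by
  have hslope := hasDerivAt_iff_tendsto_slope.mp hf
  rcases hd.lt_or_gt with h | h
  · -- d < 0 : approach from the right
    have h1 : Tendsto (slope f x) (nhdsWithin x (Set.Ioi x)) (nhds d) :=
      hslope.mono_left (nhdsWithin_mono _ (fun y hy => hy.ne'))
    have h2 : ∀ᶠ y in nhdsWithin x (Set.Ioi x), slope f x y < 0 :=
      (tendsto_order.1 h1).2 0 h
    have h3 : ∀ᶠ y in nhdsWithin x (Set.Ioi x), y ∈ s :=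
      eventually_of_mem (mem_nhdsWithin_of_mem_nhds hs) (fun y hy => hy)
    have h4 := (h2.and (h3.and (eventually_mem_nhdsWithin))).exists
    obtain ⟨y, hy1, hy2, hy3⟩ := h4
    refine ⟨y, hy2, ?_⟩
    have hxy : 0 < y - x := sub_pos.mpr hy3
    have : (y - x)⁻¹ * (f y - f x) < 0 := by
      simpa [slope_def_field, div_eq_inv_mul] using hy1
    nlinarith [inv_pos.mpr hxy]
  · -- d > 0 : approach from the left
    have h1 : Tendsto (slope f x) (nhdsWithin x (Set.Iio x)) (nhds d) :=
      hslope.mono_left (nhdsWithin_mono _ (fun y hy => hy.ne))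
    have h2 : ∀ᶠ y in nhdsWithin x (Set.Iio x), 0 < slope f x y :=
      (tendsto_order.1 h1).1 0 h
    have h3 : ∀ᶠ y in nhdsWithin x (Set.Iio x), y ∈ s :=
      eventually_of_mem (mem_nhdsWithin_of_mem_nhds hs) (fun y hy => hy)
    have h4 := (h2.and (h3.and (eventually_mem_nhdsWithin))).exists
    obtain ⟨y, hy1, hy2, hy3⟩ := h4
    refine ⟨y, hy2, ?_⟩
    have hxy : y - x < 0 := sub_neg.mpr hy3
    have : 0 < (y - x)⁻¹ * (f y - f x) := by
      simpa [slope_def_field, div_eq_inv_mul] using hy1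
    nlinarith [inv_neg''.mpr hxy]

/-- Asymmetric traffic: for `B₁ ≠ B₂`, the proportional allocation
`x_p = F·B₁/(B₁+B₂)` is not a minimizer of
`f(x) = (2^{B₁/x} − 1)^{2/α} + (2^{B₂/(F−x)} − 1)^{2/α}` on `(0, F)`;
equivalently, `f′(x_p) = δ ln 2 · h((B₁+B₂)/F) · (1/B₂ − 1/B₁) ≠ 0` where
`δ = 2/α` and `h(t) = t² 2^t (2^t − 1)^{δ−1}`. -/
theorem proportional_allocation_suboptimal (α : ℝ) (hα : 2 < α) (B₁ B₂ F : ℝ)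
    (hB₁ : 0 < B₁) (hB₂ : 0 < B₂) (hF : 0 < F) (hne : B₁ ≠ B₂) :
    (∃ x ∈ Set.Ioo (0 : ℝ) F,
      ((2 : ℝ) ^ (B₁ / x) - 1) ^ (2 / α) + ((2 : ℝ) ^ (B₂ / (F - x)) - 1) ^ (2 / α) <
        ((2 : ℝ) ^ (B₁ / (F * B₁ / (B₁ + B₂))) - 1) ^ (2 / α) +
          ((2 : ℝ) ^ (B₂ / (F - F * B₁ / (B₁ + B₂))) - 1) ^ (2 / α)) ∧
    HasDerivAt
      (fun x : ℝ =>
        ((2 : ℝ) ^ (B₁ / x) - 1) ^ (2 / α) + ((2 : ℝ) ^ (B₂ / (F - x)) - 1) ^ (2 / α))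
      ((2 / α) * Real.log 2 *
        (((B₁ + B₂) / F) ^ 2 * (2 : ℝ) ^ ((B₁ + B₂) / F) *
          ((2 : ℝ) ^ ((B₁ + B₂) / F) - 1) ^ (2 / α - 1)) *
        (1 / B₂ - 1 / B₁)) 
      (F * B₁ / (B₁ + B₂)) ∧
    (2 / α) * Real.log 2 *
        (((B₁ + B₂) / F) ^ 2 * (2 : ℝ) ^ ((B₁ + B₂) / F) *
          ((2 : ℝ) ^ ((B₁ + B₂) / F) - 1) ^ (2 / α - 1)) *
        (1 / B₂ - 1 / B₁) ≠ 0 := by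
  have hS : 0 < B₁ + B₂ := by linarith
  set xp : ℝ := F * B₁ / (B₁ + B₂) with hxp_def
  set t : ℝ := (B₁ + B₂) / F with ht_def
  set δ : ℝ := 2 / α with hδ_def
  have hδ : 0 < δ := by positivity
  have ht : 0 < t := by positivity
  have hxp0 : 0 < xp := by positivity
  have hxpF : xp < F := by
    rw [hxp_def, div_lt_iff₀ hS]
    nlinarith
  have hFxp : 0 < F - xp := sub_pos.mpr hxpF
  -- the arguments coincide at xp
  have e1 : B₁ / xp = t := by
    rw [hxp_def, ht_def]; field_simp
  have e2 : F - xp = F * B₂ / (B₁ + B₂) := by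
    rw [hxp_def]; field_simp; ring
  have e3 : B₂ / (F - xp) = t := by
    rw [e2, ht_def]; field_simp
  have h2t : (1 : ℝ) < (2 : ℝ) ^ t := by
    rw [show (1:ℝ) = (2:ℝ) ^ (0:ℝ) by simp]
    exact Real.rpow_lt_rpow_left_iff one_lt_two |>.mpr ht
  have hbase : (0 : ℝ) < (2 : ℝ) ^ t - 1 := by linarith
  -- derivative of first summand
  have hu₁ : HasDerivAt (fun x : ℝ => B₁ / x) (B₁ * (-(xp ^ 2)⁻¹)) xp := by
    simpa [div_eq_mul_inv] using (hasDerivAt_inv hxp0.ne').const_mul B₁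
  have hv₁ : HasDerivAt (fun x : ℝ => (2 : ℝ) ^ (B₁ / x))
      ((2 : ℝ) ^ (B₁ / xp) * Real.log 2 * (B₁ * (-(xp ^ 2)⁻¹))) xp :=
    (Real.hasStrictDerivAt_const_rpow two_pos (B₁ / xp)).hasDerivAt.comp xp hu₁
  have hbase₁ : (0 : ℝ) < (2 : ℝ) ^ (B₁ / xp) - 1 := by rw [e1]; exact hbase
  have hg₁ : HasDerivAt (fun x : ℝ => ((2 : ℝ) ^ (B₁ / x) - 1) ^ δ)
      (δ * ((2 : ℝ) ^ (B₁ / xp) - 1) ^ (δ - 1) *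
        ((2 : ℝ) ^ (B₁ / xp) * Real.log 2 * (B₁ * (-(xp ^ 2)⁻¹)))) xp :=
    by have := (Real.hasDerivAt_rpow_const (p := δ) (Or.inl hbase₁.ne')).comp xp (hv₁.sub_const 1); exact this
  -- derivative of second summand
  have hu₂ : HasDerivAt (fun x : ℝ => B₂ / (F - x)) (B₂ * ((F - xp) ^ 2)⁻¹) xp := by
    have hlin : HasDerivAt (fun x : ℝ => F - x) (-1) xp := by
      simpa using (hasDerivAt_id xp).const_sub F
    have := ((hasDerivAt_inv hFxp.ne').comp xp hlin).const_mul B₂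
    simpa [div_eq_mul_inv] using this
  have hv₂ : HasDerivAt (fun x : ℝ => (2 : ℝ) ^ (B₂ / (F - x)))
      ((2 : ℝ) ^ (B₂ / (F - xp)) * Real.log 2 * (B₂ * ((F - xp) ^ 2)⁻¹)) xp :=
    (Real.hasStrictDerivAt_const_rpow two_pos (B₂ / (F - xp))).hasDerivAt.comp xp hu₂
  have hbase₂ : (0 : ℝ) < (2 : ℝ) ^ (B₂ / (F - xp)) - 1 := by rw [e3]; exact hbase
  have hg₂ : HasDerivAt (fun x : ℝ => ((2 : ℝ) ^ (B₂ / (F - x)) - 1) ^ δ)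
      (δ * ((2 : ℝ) ^ (B₂ / (F - xp)) - 1) ^ (δ - 1) *
        ((2 : ℝ) ^ (B₂ / (F - xp)) * Real.log 2 * (B₂ * ((F - xp) ^ 2)⁻¹))) xp :=
    by have := (Real.hasDerivAt_rpow_const (p := δ) (Or.inl hbase₂.ne')).comp xp (hv₂.sub_const 1); exact this
  -- the sum
  have hsum := hg₁.add hg₂
  have key1 : B₁ * (xp ^ 2)⁻¹ = t ^ 2 / B₁ := by
    rw [hxp_def, ht_def]; field_simp
  have key2 : B₂ * ((F - xp) ^ 2)⁻¹ = t ^ 2 / B₂ := by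
    rw [e2, ht_def]; field_simp
  have hD : HasDerivAt
      (fun x : ℝ =>
        ((2 : ℝ) ^ (B₁ / x) - 1) ^ δ + ((2 : ℝ) ^ (B₂ / (F - x)) - 1) ^ δ)
      (δ * Real.log 2 *
        (t ^ 2 * (2 : ℝ) ^ t * ((2 : ℝ) ^ t - 1) ^ (δ - 1)) *
        (1 / B₂ - 1 / B₁)) xp := by
    refine hsum.congr_deriv (Eq.symm ?_)
    rw [e1, e3]
    have h1 : B₁ * (-(xp ^ 2)⁻¹) = -(t ^ 2 / B₁) := by rw [← key1]; ring
    rw [h1, key2]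
    field_simp
    ring
  have hDne : δ * Real.log 2 *
      (t ^ 2 * (2 : ℝ) ^ t * ((2 : ℝ) ^ t - 1) ^ (δ - 1)) *
      (1 / B₂ - 1 / B₁) ≠ 0 := by
    have hlog : Real.log 2 ≠ 0 := by
      simpa using Real.log_ne_zero_of_pos_of_ne_one two_pos (by norm_num)
    have hh : (0 : ℝ) < t ^ 2 * (2 : ℝ) ^ t * ((2 : ℝ) ^ t - 1) ^ (δ - 1) := by
      have : (0 : ℝ) < ((2 : ℝ) ^ t - 1) ^ (δ - 1) := Real.rpow_pos_of_pos hbase _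
      positivity
    have hinv : 1 / B₂ - 1 / B₁ ≠ 0 := by
      intro h
      apply hne
      have : 1 / B₂ = 1 / B₁ := by linarith
      field_simp at this
      linarith
    exact mul_ne_zero (mul_ne_zero (mul_ne_zero hδ.ne' hlog) hh.ne') hinv
  refine ⟨?_, hD, hDne⟩
  exact exists_lt_of_deriv_ne_zero (isOpen_Ioo.mem_nhds ⟨hxp0, hxpF⟩) hD hDne
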